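/- Let A be a real n×n matrix, Q a real symmetric positive definite n×n matrix, and for each time k ≥ 1 let γ_k ∈ (0, 1] and let S(k) be a real symmetric positive semidefinite n×n matrix. Let Π̂(0) and P̂(0) be real symmetric positive definite matrices with P̂(0) ≼ Π̂(0). Define recursively Π̄(k) = A Π̂(k−1) Aᵀ + Q and Π̂(k) = (γ_k Π̄(k)⁻¹ + S(k))⁻¹. Suppose P̄(k) and P̂(k) are sequences of real symmetric positive definite matrices satisfying, for every k ≥ 1, P̄(k) ≼ A P̂(k−1) Aᵀ + Q and P̂(k)⁻¹ ≽ γ_k P̄(k)⁻¹ + S(k). Then for all k ≥ 0, P̂(k) ≼ Π̂(k), and for all k ≥ 1, P̄(k) ≼ Π̄(k). -/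

import Mathlib

open Matrix

section Aux

variable {n : ℕ}

lemma psd_smul {c : ℝ} (hc : 0 ≤ c) {M : Matrix (Fin n) (Fin n) ℝ}
    (hM : M.PosSemidef) : (c • M).PosSemidef := by
  refine ⟨?_, fun x => ?_⟩
  · unfold Matrix.IsHermitian
    rw [conjTranspose_smul, star_trivial, hM.1.eq]
  · exact (hM.smul hc).2 x

lemma pd_smul {c : ℝ} (hc : 0 < c) {M : Matrix (Fin n) (Fin n) ℝ}
    (hM : M.PosDef) : (c • M).PosDef := by
  refine ⟨?_, fun x hx => ?_⟩
  · unfold Matrix.IsHermitian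
    rw [conjTranspose_smul, star_trivial, hM.1.eq]
  · exact (hM.smul hc).2 hx

/-- Antitonicity of matrix inverse on the Loewner order. -/
lemma inv_antitone {X Y : Matrix (Fin n) (Fin n) ℝ} (hX : X.PosDef) (hY : Y.PosDef)
    (h : (Y - X).PosSemidef) : (X⁻¹ - Y⁻¹).PosSemidef := by
  have hxu : IsUnit X.det := hX.det_pos.ne'.isUnit
  have hyu : IsUnit Y.det := hY.det_pos.ne'.isUnit
  have hXiH : (X⁻¹).IsHermitian := hX.isHermitian.inv
  have hYiH : (Y⁻¹).IsHermitian := hY.isHermitian.inv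
  have hCH : (X⁻¹ - Y⁻¹).IsHermitian := hXiH.sub hYiH
  have key : X⁻¹ - Y⁻¹ =
      (X⁻¹ - Y⁻¹) * X * (X⁻¹ - Y⁻¹)ᴴ + Y⁻¹ * (Y - X) * (Y⁻¹)ᴴ := by
    rw [hCH.eq, hYiH.eq]
    simp only [Matrix.sub_mul, Matrix.mul_sub, Matrix.mul_assoc,
      Matrix.nonsing_inv_mul_cancel_left _ _ hxu,
      Matrix.nonsing_inv_mul_cancel_left _ _ hyu,
      Matrix.mul_nonsing_inv _ hxu, Matrix.mul_nonsing_inv _ hyu, Matrix.mul_one]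
    abel
  rw [key]
  exact (hX.posSemidef.mul_mul_conjTranspose_same _).add
    (h.mul_mul_conjTranspose_same _)

lemma conj_psd {M : Matrix (Fin n) (Fin n) ℝ} (hM : M.PosSemidef)
    (B : Matrix (Fin n) (Fin n) ℝ) : (B * M * Bᵀ).PosSemidef := by
  have := hM.mul_mul_conjTranspose_same B
  simpa using this

end Aux

/-- paper's Lemma 2 as a deterministic matrix recursion: the
auxiliary upper bound system covariances
`Π̄(k) = A Π̂(k−1) Aᵀ + Q`, `Π̂(k) = (γ_k Π̄(k)⁻¹ + S(k))⁻¹`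
dominate, in the Loewner order, any positive definite sequences `P̄(k)`, `P̂(k)`
satisfying `P̄(k) ≼ A P̂(k−1) Aᵀ + Q` and `P̂(k)⁻¹ ≽ γ_k P̄(k)⁻¹ + S(k)`,
provided `P̂(0) ≼ Π̂(0)`. -/
theorem lemma2_covariance_recursion
    (n : ℕ) (A Q : Matrix (Fin n) (Fin n) ℝ) (hQ : Q.PosDef)
    (γ : ℕ → ℝ) (hγ0 : ∀ k, 1 ≤ k → 0 < γ k) (hγ1 : ∀ k, 1 ≤ k → γ k ≤ 1)
    (S : ℕ → Matrix (Fin n) (Fin n) ℝ) (hS : ∀ k, 1 ≤ k → (S k).PosSemidef)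
    (Pihat Pibar : ℕ → Matrix (Fin n) (Fin n) ℝ)
    (hPihat0 : (Pihat 0).PosDef)
    (hPibar_def : ∀ k, 1 ≤ k → Pibar k = A * Pihat (k - 1) * Aᵀ + Q)
    (hPihat_def : ∀ k, 1 ≤ k → Pihat k = (γ k • (Pibar k)⁻¹ + S k)⁻¹)
    (Phat Pbar : ℕ → Matrix (Fin n) (Fin n) ℝ)
    (hPhat : ∀ k, (Phat k).PosDef)
    (hPbar : ∀ k, 1 ≤ k → (Pbar k).PosDef)
    (hinit : (Pihat 0 - Phat 0).PosSemidef)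
    (hPbar_le : ∀ k, 1 ≤ k → ((A * Phat (k - 1) * Aᵀ + Q) - Pbar k).PosSemidef)
    (hPhat_le : ∀ k, 1 ≤ k → ((Phat k)⁻¹ - (γ k • (Pbar k)⁻¹ + S k)).PosSemidef) :
    (∀ k, (Pihat k - Phat k).PosSemidef) ∧
    (∀ k, 1 ≤ k → (Pibar k - Pbar k).PosSemidef) := by
  have main : ∀ k, ((Pihat k).PosDef ∧ (Pihat k - Phat k).PosSemidef) ∧
      (1 ≤ k → (Pibar k).PosDef ∧ (Pibar k - Pbar k).PosSemidef) := by
    intro k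
    induction k with
    | zero => exact ⟨⟨hPihat0, hinit⟩, fun h => absurd h (by norm_num)⟩
    | succ m ih =>
      obtain ⟨⟨ihPD, ihLE⟩, -⟩ := ih
      have hk1 : 1 ≤ m + 1 := Nat.le_add_left 1 m
      have hsub : m + 1 - 1 = m := rfl
      -- Pibar (m+1) is positive definite
      have hPibarPD : (Pibar (m + 1)).PosDef := by
        rw [hPibar_def _ hk1, hsub, add_comm]
        exact hQ.add_posSemidef (conj_psd ihPD.posSemidef A)
      -- Pibar (m+1) dominates Pbar (m+1)
      have hbarLE : (Pibar (m + 1) - Pbar (m + 1)).PosSemidef := by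
        have h1 := conj_psd ihLE A
        have h2 := hPbar_le _ hk1
        rw [hsub] at h2
        have heq : Pibar (m + 1) - Pbar (m + 1) =
            A * (Pihat m - Phat m) * Aᵀ + ((A * Phat m * Aᵀ + Q) - Pbar (m + 1)) := by
          rw [hPibar_def _ hk1, hsub]
          simp only [Matrix.mul_sub, Matrix.sub_mul]
          abel
        rw [heq]
        exact h1.add h2
      -- the updated matrix
      have hγpos := hγ0 _ hk1
      have hMPD : (γ (m + 1) • (Pibar (m + 1))⁻¹ + S (m + 1)).PosDef :=
        (pd_smul hγpos hPibarPD.inv).add_posSemidef (hS _ hk1)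
      have hPihatPD : (Pihat (m + 1)).PosDef := by
        rw [hPihat_def _ hk1]; exact hMPD.inv
      -- Phat (m+1)⁻¹ dominates the Π-update matrix
      have hdom : ((Phat (m + 1))⁻¹ - (γ (m + 1) • (Pibar (m + 1))⁻¹ + S (m + 1))).PosSemidef := by
        have h1 := hPhat_le _ hk1
        have h2 : ((Pbar (m + 1))⁻¹ - (Pibar (m + 1))⁻¹).PosSemidef :=
          inv_antitone (hPbar _ hk1) hPibarPD hbarLE
        have h3 := psd_smul hγpos.le h2
        have heq : (Phat (m + 1))⁻¹ - (γ (m + 1) • (Pibar (m + 1))⁻¹ + S (m + 1)) =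
            ((Phat (m + 1))⁻¹ - (γ (m + 1) • (Pbar (m + 1))⁻¹ + S (m + 1))) +
            γ (m + 1) • ((Pbar (m + 1))⁻¹ - (Pibar (m + 1))⁻¹) := by
          rw [smul_sub]; abel
        rw [heq]
        exact h1.add h3
      have hhatLE : (Pihat (m + 1) - Phat (m + 1)).PosSemidef := by
        have hPhatInvPD : ((Phat (m + 1))⁻¹).PosDef := (hPhat (m + 1)).inv
        have := inv_antitone hMPD hPhatInvPD hdom
        rw [Matrix.nonsing_inv_nonsing_inv _ (hPhat (m + 1)).det_pos.ne'.isUnit,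
          ← hPihat_def _ hk1] at this
        exact this
      exact ⟨⟨hPihatPD, hhatLE⟩, fun _ => ⟨hPibarPD, hbarLE⟩⟩
  exact ⟨fun k => (main k).1.2, fun k hk => ((main k).2 hk).2⟩
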